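/- Proposition 6.1 (coefficient transfer): Let Σ be a k×k symmetric positive definite matrix, μ̃ ∈ R^k, A = Σ + μ̃μ̃′, and α̃ ≠ 0. Define Q̃ = A⁻¹ − (A⁻¹11′A⁻¹)/(1′A⁻¹1), Q = Σ⁻¹ − (Σ⁻¹11′Σ⁻¹)/(1′Σ⁻¹1), and suppose (1+μ̃′Σ⁻¹μ̃)(1′Σ⁻¹1) − (1′Σ⁻¹μ̃)² ≠ 0. Then A⁻¹1/(1′A⁻¹1) + α̃⁻¹ Q̃ μ̃ = Σ⁻¹1/(1′Σ⁻¹1) + α⁻¹ Q μ̃, where α⁻¹ = (α̃⁻¹ (1′Σ⁻¹1) − 1′Σ⁻¹μ̃) / ((1+μ̃′Σ⁻¹μ̃)(1′Σ⁻¹1) − (1′Σ⁻¹μ̃)²). -/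

import Mathlib

open Matrix

lemma vmv_mulVec {k : ℕ} (w v x : Fin k → ℝ) : vecMulVec w v *ᵥ x = (v ⬝ᵥ x) • w := by
  ext i
  simp only [mulVec, dotProduct, vecMulVec_apply, Pi.smul_apply, smul_eq_mul, Finset.sum_mul]
  exact Finset.sum_congr rfl fun j _ => by ring

lemma dot_symm {k : ℕ} {M : Matrix (Fin k) (Fin k) ℝ} (hM : M.IsHermitian) (x y : Fin k → ℝ) :
    x ⬝ᵥ M *ᵥ y = y ⬝ᵥ M *ᵥ x := by
  rw [dotProduct_mulVec, ← mulVec_transpose, dotProduct_comm,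
    ← conjTranspose_eq_transpose_of_trivial, hM.eq]

lemma vmv_posSemidef {k : ℕ} (μ : Fin k → ℝ) : (vecMulVec μ μ).PosSemidef := by
  refine PosSemidef.of_dotProduct_mulVec_nonneg ?_ ?_
  · ext i j; simp [conjTranspose_apply, vecMulVec_apply, mul_comm]
  · intro x
    rw [vmv_mulVec, dotProduct_smul, star_trivial, smul_eq_mul, dotProduct_comm]
    exact mul_self_nonneg _

theorem stmt_10 {k : ℕ} (S : Matrix (Fin k) (Fin k) ℝ) (hS : S.PosDef)
    (μ : Fin k → ℝ) (αt : ℝ) (hαt : αt ≠ 0)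
    (hden : (1 + μ ⬝ᵥ S⁻¹ *ᵥ μ) * ((fun _ => (1:ℝ)) ⬝ᵥ S⁻¹ *ᵥ (fun _ => (1:ℝ)))
        - ((fun _ => (1:ℝ)) ⬝ᵥ S⁻¹ *ᵥ μ) ^ 2 ≠ 0) :
    let ones : Fin k → ℝ := fun _ => 1
    let A : Matrix (Fin k) (Fin k) ℝ := S + vecMulVec μ μ
    let Qt : Matrix (Fin k) (Fin k) ℝ :=
      A⁻¹ - (ones ⬝ᵥ A⁻¹ *ᵥ ones)⁻¹ • (A⁻¹ * vecMulVec ones ones * A⁻¹)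
    let Q : Matrix (Fin k) (Fin k) ℝ :=
      S⁻¹ - (ones ⬝ᵥ S⁻¹ *ᵥ ones)⁻¹ • (S⁻¹ * vecMulVec ones ones * S⁻¹)
    let αinv : ℝ :=
      (αt⁻¹ * (ones ⬝ᵥ S⁻¹ *ᵥ ones) - ones ⬝ᵥ S⁻¹ *ᵥ μ) /
        ((1 + μ ⬝ᵥ S⁻¹ *ᵥ μ) * (ones ⬝ᵥ S⁻¹ *ᵥ ones) - (ones ⬝ᵥ S⁻¹ *ᵥ μ) ^ 2)
    (ones ⬝ᵥ A⁻¹ *ᵥ ones)⁻¹ • (A⁻¹ *ᵥ ones) + αt⁻¹ • (Qt *ᵥ μ) =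
      (ones ⬝ᵥ S⁻¹ *ᵥ ones)⁻¹ • (S⁻¹ *ᵥ ones) + αinv • (Q *ᵥ μ) := by
  intro ones A Qt Q αinv
  rcases Nat.eq_zero_or_pos k with hk | hk
  · subst hk; funext i; exact i.elim0
  -- notation
  have hSinv : (S⁻¹).PosDef := hS.inv
  set u : Fin k → ℝ := S⁻¹ *ᵥ ones with hu
  set v : Fin k → ℝ := S⁻¹ *ᵥ μ with hv
  have hones_ne : ones ≠ 0 := by
    intro h
    have := congrFun h ⟨0, hk⟩
    simp [ones] at this
  set a : ℝ := ones ⬝ᵥ u with ha_def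
  set b : ℝ := ones ⬝ᵥ v with hb_def
  set c : ℝ := μ ⬝ᵥ v with hc_def
  have hden' : (1 + c) * a - b ^ 2 ≠ 0 := hden
  have ha : 0 < a := by
    have := hSinv.dotProduct_mulVec_pos hones_ne
    rwa [star_trivial] at this
  have hc : 0 ≤ c := by
    have := hSinv.posSemidef.dotProduct_mulVec_nonneg μ
    rwa [star_trivial] at this
  set d : ℝ := 1 + c with hd_def
  have hd : d ≠ 0 := by positivity
  have hμu : μ ⬝ᵥ u = b := by rw [hu, hb_def, hv, dot_symm hSinv.1]
  -- A is posdef hence invertible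
  have hA : A.PosDef := hS.add_posSemidef (vmv_posSemidef μ)
  have hAinv_cancel : ∀ w : Fin k → ℝ, A⁻¹ *ᵥ (A *ᵥ w) = w := by
    intro w
    rw [mulVec_mulVec, nonsing_inv_mul A (isUnit_iff_isUnit_det A |>.1 hA.isUnit), one_mulVec]
  have hSu : S *ᵥ u = ones := by
    rw [hu, mulVec_mulVec, mul_nonsing_inv S (isUnit_iff_isUnit_det S |>.1 hS.isUnit), one_mulVec]
  have hSv : S *ᵥ v = μ := by
    rw [hv, mulVec_mulVec, mul_nonsing_inv S (isUnit_iff_isUnit_det S |>.1 hS.isUnit), one_mulVec]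
  have hAmv : ∀ w : Fin k → ℝ, A *ᵥ w = S *ᵥ w + (μ ⬝ᵥ w) • μ := by
    intro w
    show (S + vecMulVec μ μ) *ᵥ w = _
    rw [add_mulVec, vmv_mulVec]
  have hA1 : A⁻¹ *ᵥ ones = u - (b / d) • v := by
    have h1 : A *ᵥ (u - (b / d) • v) = ones := by
      rw [hAmv, mulVec_sub, mulVec_smul, hSu, hSv, dotProduct_sub, dotProduct_smul, hμu,
        ← hc_def]
      funext i
      simp only [Pi.add_apply, Pi.sub_apply, Pi.smul_apply, smul_eq_mul]
      field_simp
      ring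
    rw [← h1, hAinv_cancel]
  have hAμ : A⁻¹ *ᵥ μ = d⁻¹ • v := by
    have h1 : A *ᵥ (d⁻¹ • v) = μ := by
      rw [hAmv, mulVec_smul, hSv, dotProduct_smul, ← hc_def]
      funext i
      simp only [Pi.add_apply, Pi.smul_apply, smul_eq_mul]
      field_simp
      ring
    rw [← h1, hAinv_cancel]
  -- scalar quantities with A
  have haA : ones ⬝ᵥ A⁻¹ *ᵥ ones = a - b * (b / d) := by
    rw [hA1, dotProduct_sub, dotProduct_smul, ← ha_def, ← hb_def, smul_eq_mul, mul_comm]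
  have haA_eq : a - b * (b / d) = (d * a - b ^ 2) / d := by field_simp
  have hden2 : d * a - b ^ 2 ≠ 0 := hden'
  have haA_ne : a - b * (b / d) ≠ 0 := by rw [haA_eq]; exact div_ne_zero hden2 hd
  have h1Aμ : ones ⬝ᵥ A⁻¹ *ᵥ μ = d⁻¹ * b := by
    rw [hAμ, dotProduct_smul, ← hb_def, smul_eq_mul]
  -- Qt *ᵥ μ
  have hQt : Qt *ᵥ μ = d⁻¹ • v - (a - b * (b / d))⁻¹ • ((d⁻¹ * b) • (u - (b / d) • v)) := by
    show (A⁻¹ - (ones ⬝ᵥ A⁻¹ *ᵥ ones)⁻¹ • (A⁻¹ * vecMulVec ones ones * A⁻¹)) *ᵥ μ = _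
    rw [sub_mulVec, smul_mulVec, ← mulVec_mulVec, ← mulVec_mulVec, vmv_mulVec,
      mulVec_smul, h1Aμ, haA, hAμ, hA1]
  have hQ : Q *ᵥ μ = v - a⁻¹ • (b • u) := by
    show (S⁻¹ - (ones ⬝ᵥ S⁻¹ *ᵥ ones)⁻¹ • (S⁻¹ * vecMulVec ones ones * S⁻¹)) *ᵥ μ = _
    rw [sub_mulVec, smul_mulVec, ← mulVec_mulVec, ← mulVec_mulVec, vmv_mulVec,
      mulVec_smul, ← hv, ← hb_def, ← hu, ← ha_def]
  have hαinv : αinv = (αt⁻¹ * a - b) / (d * a - b ^ 2) := rfl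
  rw [haA, hQt, hQ, hαinv, hA1, haA_eq]
  funext i
  simp only [Pi.add_apply, Pi.sub_apply, Pi.smul_apply, smul_eq_mul]
  field_simp
  ring
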